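/- Let S be a set of vertices of the infinite cubic tree T_∞. If u and v are vertices of T_∞ at distance d from each other, then f(v,S) ≥ (1/2^d)·f(u,S). In particular, if f(u*,S) > 0 for some vertex u*, then f(u,S) > 0 for every vertex u of T_∞. -/

import Mathlib

open SimpleGraph
open scoped Classical ENNReal

/-- The graph obtained from `G` by deleting the vertices of `A`
(they are kept as isolated vertices, which does not affect adjacency or distances
among the remaining vertices). -/
def SimpleGraph.deleteSet {V : Type*} (G : SimpleGraph V) (A : Set V) : SimpleGraph V where
  Adj x y := G.Adj x y ∧ x ∉ A ∧ y ∉ A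
  symm := ⟨fun _ _ ⟨h, hx, hy⟩ => ⟨h.symm, hy, hx⟩⟩
  loopless := ⟨fun x ⟨h, _, _⟩ => G.loopless.irrefl x h⟩

/-- `dist_{(G,S)}(u,v)`: the distance between `u` and `v` in `G - (S \ {u,v})`,
with value `⊤` if there is no path between `u` and `v` in that graph. -/
noncomputable def distDel {V : Type*} (G : SimpleGraph V) (S : Set V) (u v : V) : ℕ∞ :=
  (G.deleteSet (S \ {u, v})).edist u v

/-- `w_{(G,S)}(u) = Σ_{v ∈ S} (1/2)^{dist_{(G,S)}(u,v) - 1}`, a sum with values in `[0,∞]`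
in which a summand with infinite distance equals `0`. -/
noncomputable def expWSet {V : Type*} (G : SimpleGraph V) (S : Set V) (u : V) : ℝ≥0∞ :=
  ∑' v : S, if distDel G S u (v : V) = ⊤ then 0
    else 2 * (2⁻¹ : ℝ≥0∞) ^ (distDel G S u (v : V)).toNat

/-- `S` is exponentially independent in `G`: `w_{(G,S∖{u})}(u) < 1` for every `u ∈ S`. -/
def ExpIndepSet {V : Type*} (G : SimpleGraph V) (S : Set V) : Prop :=
  ∀ u ∈ S, expWSet G (S \ {u}) u < 1

/-- `G` is an infinite cubic tree: a connected acyclic graph on a countably infinite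
vertex set in which every vertex has degree `3`. -/
def IsInfCubicTree {V : Type*} (G : SimpleGraph V) : Prop :=
  Countable V ∧ Infinite V ∧ G.Connected ∧ G.IsAcyclic ∧
    ∀ v : V, (G.neighborSet v).encard = 3

/-- `f(u,S) = limsup_{k→∞} |S ∩ B^k(u)| / |B^k(u)|`, where `B^k(u)` is the ball of
radius `k` around `u`, of cardinality `3·2^k - 2` in the infinite cubic tree. -/
noncomputable def ballDensity {V : Type*} (G : SimpleGraph V) (S : Set V) (u : V) : ℝ :=
  Filter.limsup (fun k : ℕ =>
    ((S ∩ {v : V | G.edist u v ≤ (k : ℕ∞)}).ncard : ℝ) / (3 * 2 ^ k - 2)) Filter.atTop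

open Filter

private lemma limsup_nonneg_aux (f : ℕ → ℝ) (hf : ∀ k, 0 ≤ f k) :
    0 ≤ limsup f atTop := by
  rw [limsup_eq]
  apply Real.sInf_nonneg
  intro x hx
  obtain ⟨k, hk⟩ := hx.exists
  exact le_trans (hf k) hk

private lemma limsup_unbdd_aux (f : ℕ → ℝ) (h : ¬ atTop.IsBoundedUnder (· ≤ ·) f) :
    limsup f atTop = 0 := by
  rw [limsup_eq]
  convert Real.sInf_empty
  case e'_2 => rfl
  rw [Set.eq_empty_iff_forall_notMem]
  intro x hx
  exact h ⟨x, by simpa [eventually_map] using hx⟩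

private lemma limsup_key_aux {a b : ℕ → ℝ} {c : ℝ} (hc : 0 < c) {r : ℕ → ℝ}
    (ha0 : ∀ k, 0 ≤ a k) (hb0 : ∀ k, 0 ≤ b k)
    (hrc : Tendsto r atTop (nhds c)) {d : ℕ}
    (hab : ∀ k, r k * a k ≤ b (k + d)) (hba : ∀ k, r k * b k ≤ a (k + d)) :
    c * limsup a atTop ≤ limsup b atTop := by
  have hbL : 0 ≤ limsup b atTop := limsup_nonneg_aux b hb0
  have haL : 0 ≤ limsup a atTop := limsup_nonneg_aux a ha0
  by_cases habdd : atTop.IsBoundedUnder (· ≤ ·) a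
  swap
  · rw [limsup_unbdd_aux a habdd, mul_zero]; exact hbL
  obtain ⟨M, hM⟩ := id habdd
  rw [eventually_map] at hM
  have hMa : ∀ᶠ k in atTop, a (k + d) ≤ M := (tendsto_add_atTop_nat d).eventually hM
  have hrhalf : ∀ᶠ k in atTop, c / 2 ≤ r k :=
    hrc.eventually (eventually_ge_nhds (by linarith))
  have hbM : ∀ᶠ k in atTop, b k ≤ 2 / c * M := by
    filter_upwards [hrhalf, hMa] with k h1 h2
    have h3 := hba k
    have h4 := hb0 k
    rw [div_mul_eq_mul_div, le_div_iff₀ hc]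
    nlinarith
  have hbbdd' : atTop.IsBoundedUnder (· ≤ ·) (fun k => b (k + d)) :=
    ⟨2 / c * M, by rw [eventually_map]; exact (tendsto_add_atTop_nat d).eventually hbM⟩
  have hacob : atTop.IsCoboundedUnder (· ≤ ·) a :=
    isCoboundedUnder_le_of_eventually_le atTop (x := 0) (Eventually.of_forall ha0)
  have hsuf : ∀ ε : ℝ, 0 < ε → ε < c → (c - ε) * limsup a atTop ≤ limsup b atTop := by
    intro ε hε hεc
    have hev : ∀ᶠ k in atTop, (c - ε) * a k ≤ b (k + d) := by
      filter_upwards [hrc.eventually (eventually_ge_nhds (show c - ε < c by linarith))]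
        with k hk
      exact le_trans (mul_le_mul_of_nonneg_right hk (ha0 k)) (hab k)
    have hcob2 : atTop.IsCoboundedUnder (· ≤ ·) (fun k => (c - ε) * a k) :=
      isCoboundedUnder_le_of_eventually_le atTop (x := 0)
        (Eventually.of_forall (fun k => mul_nonneg (by linarith) (ha0 k)))
    have h1 : limsup (fun k => (c - ε) * a k) atTop ≤ limsup (fun k => b (k + d)) atTop :=
      limsup_le_limsup hev hcob2 hbbdd'
    have h2 : limsup (fun k => b (k + d)) atTop = limsup b atTop := limsup_nat_add b d
    have h3 : (c - ε) * limsup a atTop = limsup (fun k => (c - ε) * a k) atTop := by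
      have mono : Monotone (fun x : ℝ => (c - ε) * x) :=
        fun x y h => mul_le_mul_of_nonneg_left h (by linarith)
      exact mono.map_limsup_of_continuousAt a
        ((continuous_const.mul continuous_id).continuousAt) habdd hacob
    rw [h3]
    rw [h2] at h1
    exact h1
  rcases eq_or_lt_of_le haL with hLa0 | hLa
  · rw [← hLa0, mul_zero]; exact hbL
  by_contra hcon
  push_neg at hcon
  set La := limsup a atTop
  set Lb := limsup b atTop
  set ε := (c * La - Lb) / (2 * La) with hεdef
  have hεpos : 0 < ε := div_pos (by linarith) (by linarith)
  have hεeq : ε * (2 * La) = c * La - Lb := div_mul_cancel₀ _ (by linarith)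
  have hεc : ε < c := by
    rw [hεdef, div_lt_iff₀ (by linarith)]
    nlinarith
  have hkey := hsuf ε hεpos hεc
  nlinarith

private lemma ball_finite_aux {V : Type*} (G : SimpleGraph V)
    (hfin : ∀ v : V, (G.neighborSet v).Finite) (u : V) :
    ∀ k : ℕ, {v : V | G.edist u v ≤ (k : ℕ∞)}.Finite := by
  intro k
  induction k with
  | zero =>
    apply Set.Finite.subset (Set.finite_singleton u)
    intro v hv
    simp only [Set.mem_setOf_eq, Nat.cast_zero, nonpos_iff_eq_zero] at hv
    simp [(SimpleGraph.edist_eq_zero_iff.mp hv).symm]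
  | succ k ih =>
    apply Set.Finite.subset (ih.union (Set.Finite.biUnion ih (fun w _ => hfin w)))
    intro v hv
    simp only [Set.mem_setOf_eq] at hv
    by_cases h : G.edist u v ≤ (k : ℕ∞)
    · exact Or.inl h
    · have hlt : (k : ℕ∞) < G.edist u v := not_le.mp h
      have heq : G.edist v u = ((k + 1 : ℕ) : ℕ∞) := by
        rw [SimpleGraph.edist_comm]
        refine le_antisymm (by exact_mod_cast hv) ?_
        push_cast
        exact Order.add_one_le_of_lt hlt
      obtain ⟨p, hp⟩ := SimpleGraph.exists_walk_of_edist_eq_coe heq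
      cases p with
      | nil => simp at hp
      | @cons _ w _ hadj q =>
        rw [SimpleGraph.Walk.length_cons] at hp
        have hq : G.edist u w ≤ (k : ℕ∞) := by
          rw [SimpleGraph.edist_comm]
          calc G.edist w u ≤ q.length := SimpleGraph.edist_le q
          _ = (k : ℕ∞) := by exact_mod_cast Nat.succ_injective hp
        exact Or.inr (Set.mem_biUnion hq hadj.symm)

/-- For a set `S` of vertices of the infinite cubic tree: if `u` and `v` are vertices at
distance `d`, then `f(v,S) ≥ (1/2^d)·f(u,S)`; in particular, if `f(u*,S) > 0` for some
vertex `u*`, then `f(u,S) > 0` for every vertex `u`. -/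
theorem stmt5 {V : Type*} (G : SimpleGraph V) (hG : IsInfCubicTree G) (S : Set V) :
    (∀ u v : V, ∀ d : ℕ, G.edist u v = (d : ℕ∞) →
      (1 / 2 ^ d : ℝ) * ballDensity G S u ≤ ballDensity G S v) ∧
    ((∃ ustar : V, 0 < ballDensity G S ustar) → ∀ u : V, 0 < ballDensity G S u) := by
  obtain ⟨-, -, hconn, -, hdeg⟩ := hG
  have hfin : ∀ v : V, (G.neighborSet v).Finite := by
    intro v
    rw [← Set.encard_ne_top_iff, hdeg v]
    decide
  have hball := ball_finite_aux G hfin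
  set aa : V → ℕ → ℝ := fun w k =>
    ((S ∩ {x : V | G.edist w x ≤ (k : ℕ∞)}).ncard : ℝ) / (3 * 2 ^ k - 2) with haadef
  have hdens : ∀ w : V, ballDensity G S w = limsup (aa w) atTop := fun w => rfl
  have hden : ∀ k : ℕ, (0 : ℝ) < 3 * 2 ^ k - 2 := by
    intro k
    have h1 : (1 : ℝ) ≤ 2 ^ k := one_le_pow₀ (by norm_num)
    linarith
  have haa0 : ∀ w k, 0 ≤ aa w k := fun w k => div_nonneg (Nat.cast_nonneg _) (hden k).le
  have hpt : ∀ (w w' : V) (d : ℕ), G.edist w' w = (d : ℕ∞) → ∀ k : ℕ,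
      (3 * 2 ^ k - 2) / (3 * 2 ^ (k + d) - 2) * aa w k ≤ aa w' (k + d) := by
    intro w w' d hd k
    have hsub : {x : V | G.edist w x ≤ (k : ℕ∞)}
        ⊆ {x : V | G.edist w' x ≤ ((k + d : ℕ) : ℕ∞)} := by
      intro x hx
      simp only [Set.mem_setOf_eq] at hx ⊢
      calc G.edist w' x ≤ G.edist w' w + G.edist w x := SimpleGraph.edist_triangle
      _ ≤ (d : ℕ∞) + (k : ℕ∞) := add_le_add hd.le hx
      _ = ((k + d : ℕ) : ℕ∞) := by push_cast; rw [add_comm]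
    have hcard : ((S ∩ {x : V | G.edist w x ≤ (k : ℕ∞)}).ncard : ℝ)
        ≤ ((S ∩ {x : V | G.edist w' x ≤ ((k + d : ℕ) : ℕ∞)}).ncard : ℝ) := by
      exact_mod_cast Set.ncard_le_ncard (Set.inter_subset_inter_right S hsub)
        ((hball w' (k + d)).inter_of_right S)
    have e1 : (3 * 2 ^ k - 2 : ℝ) ≠ 0 := (hden k).ne'
    have e2 : (3 * 2 ^ (k + d) - 2 : ℝ) ≠ 0 := (hden (k + d)).ne'
    have step : (3 * 2 ^ k - 2) / (3 * 2 ^ (k + d) - 2) * aa w k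
        = ((S ∩ {x : V | G.edist w x ≤ (k : ℕ∞)}).ncard : ℝ) / (3 * 2 ^ (k + d) - 2) := by
      rw [haadef]
      field_simp
    rw [step]
    simp only [haadef]
    gcongr
    exact (hden _).le
  have hrc : ∀ d : ℕ, Tendsto (fun k : ℕ => (3 * 2 ^ k - 2) / (3 * 2 ^ (k + d) - 2) : ℕ → ℝ)
      atTop (nhds (1 / 2 ^ d)) := by
    intro d
    have h2 : Tendsto (fun k : ℕ => (2⁻¹ : ℝ) ^ k) atTop (nhds 0) :=
      tendsto_pow_atTop_nhds_zero_of_lt_one (by norm_num) (by norm_num)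
    have hmain : Tendsto (fun k : ℕ => (3 - 2 * (2⁻¹ : ℝ) ^ k) / (3 * 2 ^ d - 2 * (2⁻¹ : ℝ) ^ k))
        atTop (nhds ((3 - 2 * 0) / (3 * 2 ^ d - 2 * 0))) := by
      apply Tendsto.div (tendsto_const_nhds.sub (h2.const_mul 2))
        (tendsto_const_nhds.sub (h2.const_mul 2))
      simp only [mul_zero, sub_zero]
      positivity
    convert hmain using 2 with k
    · have hk : (2 : ℝ) ^ k ≠ 0 := by positivity
      have hd2 : (2 : ℝ) ^ d ≠ 0 := by positivity
      rw [inv_pow, pow_add]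
      field_simp
    · have hd2 : (2 : ℝ) ^ d ≠ 0 := by positivity
      field_simp
      ring
  have key : ∀ u v : V, ∀ d : ℕ, G.edist u v = (d : ℕ∞) →
      (1 / 2 ^ d : ℝ) * ballDensity G S u ≤ ballDensity G S v := by
    intro u v d hd
    rw [hdens u, hdens v]
    exact limsup_key_aux (by positivity) (haa0 u) (haa0 v) (hrc d)
      (hpt u v d (by rwa [SimpleGraph.edist_comm])) (hpt v u d hd)
  refine ⟨key, ?_⟩
  rintro ⟨ustar, hstar⟩ u
  have hreach : G.Reachable ustar u := hconn.preconnected ustar u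
  have hne : G.edist ustar u ≠ ⊤ := SimpleGraph.edist_ne_top_iff_reachable.mpr hreach
  have hd : G.edist ustar u = (((G.edist ustar u).toNat : ℕ) : ℕ∞) := (ENat.coe_toNat hne).symm
  calc (0 : ℝ) < (1 / 2 ^ ((G.edist ustar u).toNat) : ℝ) * ballDensity G S ustar :=
        mul_pos (by positivity) hstar
  _ ≤ ballDensity G S u := key ustar u _ hd
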